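/- Let Ψ, Φ̃ ∈ ℝ^{M×N}, let Φ̃ = U Σ Vᵀ be an SVD of Φ̃ with singular values σ₁ ≥ ... ≥ σ_N, and let Z be the M×n matrix of the first n left singular vectors. Then ‖(I − Z Zᵀ)Ψ‖_F ≤ ‖Ψ − Φ̃‖_F + (Σ_{j=n+1}^{N} σ_j²)^{1/2}. -/

import Mathlib

open Matrix

/-- Frobenius norm of a real matrix. -/
noncomputable def frobNorm {m n : Type*} [Fintype m] [Fintype n]
    (A : Matrix m n ℝ) : ℝ :=
  Real.sqrt (∑ i, ∑ j, (A i j) ^ 2)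

lemma frobSq_eq_trace {m n : Type*} [Fintype m] [Fintype n] (A : Matrix m n ℝ) :
    (∑ i, ∑ j, (A i j) ^ 2) = (Aᵀ * A).trace := by
  rw [Finset.sum_comm]
  simp [Matrix.trace, Matrix.mul_apply, Matrix.diag, sq]

lemma frobSq_nonneg {m n : Type*} [Fintype m] [Fintype n] (A : Matrix m n ℝ) :
    0 ≤ ∑ i, ∑ j, (A i j) ^ 2 :=
  Finset.sum_nonneg fun _ _ => Finset.sum_nonneg fun _ _ => sq_nonneg _

noncomputable def matVec {m n : Type*} [Fintype m] [Fintype n]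
    (A : Matrix m n ℝ) : EuclideanSpace ℝ (m × n) :=
  (WithLp.equiv 2 (m × n → ℝ)).symm (fun p => A p.1 p.2)

lemma frobNorm_eq_norm {m n : Type*} [Fintype m] [Fintype n] (A : Matrix m n ℝ) :
    frobNorm A = ‖matVec A‖ := by
  rw [frobNorm, EuclideanSpace.norm_eq]
  congr 1
  rw [Fintype.sum_prod_type]
  simp [matVec, Real.norm_eq_abs, sq_abs]

lemma frobNorm_add_le {m n : Type*} [Fintype m] [Fintype n] (A B : Matrix m n ℝ) :
    frobNorm (A + B) ≤ frobNorm A + frobNorm B := by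
  rw [frobNorm_eq_norm, frobNorm_eq_norm, frobNorm_eq_norm]
  have : matVec (A + B) = matVec A + matVec B := rfl
  rw [this]
  exact norm_add_le _ _

lemma frobNorm_proj_mul_le {m k n : Type*} [Fintype m] [Fintype k] [Fintype n]
    [DecidableEq m] [DecidableEq k]
    (Z : Matrix m k ℝ) (hZZ : Zᵀ * Z = 1) (A : Matrix m n ℝ) :
    frobNorm ((1 - Z * Zᵀ) * A) ≤ frobNorm A := by
  apply Real.sqrt_le_sqrt
  rw [frobSq_eq_trace, frobSq_eq_trace]
  have hQQ : (1 - Z * Zᵀ) * (1 - Z * Zᵀ) = 1 - Z * Zᵀ := by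
    have h : Z * Zᵀ * (Z * Zᵀ) = Z * Zᵀ := by
      rw [Matrix.mul_assoc, ← Matrix.mul_assoc Zᵀ, hZZ, Matrix.one_mul]
    rw [sub_mul, one_mul, mul_sub, mul_one, h]
    abel
  have expand : ((1 - Z * Zᵀ) * A)ᵀ * ((1 - Z * Zᵀ) * A)
      = Aᵀ * A - (Zᵀ * A)ᵀ * (Zᵀ * A) := by
    have h1 : ((1 - Z * Zᵀ) * A)ᵀ = Aᵀ * (1 - Z * Zᵀ) := by
      rw [Matrix.transpose_mul, Matrix.transpose_sub, Matrix.transpose_one,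
        Matrix.transpose_mul, Matrix.transpose_transpose]
    rw [h1, Matrix.mul_assoc, ← Matrix.mul_assoc (1 - Z * Zᵀ), hQQ,
      Matrix.sub_mul, Matrix.one_mul, Matrix.mul_sub,
      Matrix.transpose_mul, Matrix.transpose_transpose]
    congr 1
    rw [Matrix.mul_assoc Z, ← Matrix.mul_assoc Aᵀ]
  rw [expand, Matrix.trace_sub]
  have h0 : 0 ≤ ((Zᵀ * A)ᵀ * (Zᵀ * A)).trace := by
    rw [← frobSq_eq_trace]; exact frobSq_nonneg _
  linarith

/-- Let `Ψ, Φ̃ ∈ ℝ^{M×N}`, let `Φ̃ = U Σ Vᵀ` be an SVD with singular values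
`σ₁ ≥ ... ≥ σ_N ≥ 0`, and let `Z` consist of the first `n` left singular vectors.
Then `‖(I − Z Zᵀ)Ψ‖_F ≤ ‖Ψ − Φ̃‖_F + (Σ_{j>n} σ_j²)^{1/2}`. -/
theorem frobNorm_projection_le_approx_add_tail
    {M N n : ℕ} (hn : n ≤ N)
    (Ψ Φt : Matrix (Fin M) (Fin N) ℝ)
    (U : Matrix (Fin M) (Fin N) ℝ) (V : Matrix (Fin N) (Fin N) ℝ)
    (σ : Fin N → ℝ)
    (hU : Uᵀ * U = 1) (hV : Vᵀ * V = 1)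
    (hσpos : ∀ j, 0 ≤ σ j) (hσmono : Antitone σ)
    (hSVD : Φt = U * Matrix.diagonal σ * Vᵀ)
    (Z : Matrix (Fin M) (Fin n) ℝ)
    (hZ : Z = Matrix.of fun i (j : Fin n) => U i (Fin.castLE hn j)) :
    frobNorm ((1 - Z * Zᵀ) * Ψ)
      ≤ frobNorm (Ψ - Φt)
        + Real.sqrt (∑ j ∈ Finset.univ.filter (fun j : Fin N => n ≤ (j : ℕ)), (σ j) ^ 2) := by
  set σ' : Fin N → ℝ := fun l => if n ≤ (l : ℕ) then σ l else 0 with hσ'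
  have key : ∀ a b : Fin N, ∑ k, U k a * U k b = if a = b then 1 else 0 := by
    intro a b
    have := congrFun (congrFun hU a) b
    simpa [Matrix.mul_apply, Matrix.one_apply] using this
  -- ZᵀZ = 1
  have hZZ : Zᵀ * Z = 1 := by
    ext i j
    rw [Matrix.mul_apply]
    simp only [hZ, Matrix.transpose_apply, Matrix.of_apply]
    rw [key]
    simp [Matrix.one_apply, Fin.castLE_inj]
  -- Z Zᵀ U = U D
  have hQU : Z * Zᵀ * U
      = U * Matrix.diagonal (fun l : Fin N => if (l : ℕ) < n then (1:ℝ) else 0) := by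
    ext i l
    rw [Matrix.mul_assoc, Matrix.mul_apply, Matrix.mul_diagonal]
    have h1 : ∀ j : Fin n, (Zᵀ * U) j l = if Fin.castLE hn j = l then 1 else 0 := by
      intro j
      rw [Matrix.mul_apply]
      simp only [hZ, Matrix.transpose_apply, Matrix.of_apply]
      exact key _ l
    simp only [h1]
    by_cases h : (l : ℕ) < n
    · have hc : ∀ j : Fin n, (Fin.castLE hn j = l) = (j = ⟨(l : ℕ), h⟩) := by
        intro j
        simp [Fin.ext_iff]
      simp only [hc, mul_ite, mul_one, mul_zero]
      rw [Finset.sum_ite_eq' Finset.univ (⟨(l : ℕ), h⟩ : Fin n)]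
      simp [h, hZ, Fin.ext_iff]
    · have hc : ∀ j : Fin n, ¬ (Fin.castLE hn j = l) := by
        intro j hj
        apply h
        rw [← hj]
        simp [j.isLt]
      simp [hc, h]
  -- P Φt = U diagonal σ' Vᵀ
  have hPΦ : (1 - Z * Zᵀ) * Φt = U * Matrix.diagonal σ' * Vᵀ := by
    rw [hSVD, Matrix.sub_mul, Matrix.one_mul, ← Matrix.mul_assoc, ← Matrix.mul_assoc, hQU,
      Matrix.mul_assoc U _ (Matrix.diagonal σ), Matrix.diagonal_mul_diagonal,
      ← Matrix.sub_mul, ← Matrix.mul_sub, Matrix.diagonal_sub]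
    congr 1
    congr 1
    congr 1
    funext l
    by_cases h : (l : ℕ) < n
    · simp [Matrix.diagonal, hσ', h, Nat.not_le.mpr h]
    · simp [Matrix.diagonal, hσ', h, Nat.not_lt.mp h]
  -- ‖P Φt‖² = ∑ σ'²
  have hTail : frobNorm ((1 - Z * Zᵀ) * Φt) = Real.sqrt (∑ l, σ' l ^ 2) := by
    rw [hPΦ, frobNorm, frobSq_eq_trace]
    have hT : (U * Matrix.diagonal σ' * Vᵀ)ᵀ * (U * Matrix.diagonal σ' * Vᵀ)
        = V * (Matrix.diagonal σ' * Matrix.diagonal σ') * Vᵀ := by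
      have h2 : ∀ B : Matrix (Fin N) (Fin N) ℝ, Uᵀ * (U * B) = B := by
        intro B; rw [← Matrix.mul_assoc, hU, Matrix.one_mul]
      simp only [Matrix.transpose_mul, Matrix.transpose_transpose,
        Matrix.diagonal_transpose, Matrix.mul_assoc, h2]
    rw [hT, Matrix.trace_mul_comm, ← Matrix.mul_assoc, hV, Matrix.one_mul,
      Matrix.diagonal_mul_diagonal, Matrix.trace_diagonal]
    simp [sq]
  have hTailSum : (∑ l, σ' l ^ 2)
      = ∑ j ∈ Finset.univ.filter (fun j : Fin N => n ≤ (j : ℕ)), (σ j) ^ 2 := by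
    rw [Finset.sum_filter]
    congr 1
    funext l
    by_cases h : n ≤ (l : ℕ) <;> simp [hσ', h]
  -- assemble
  have hsplit : (1 - Z * Zᵀ) * Ψ
      = (1 - Z * Zᵀ) * (Ψ - Φt) + (1 - Z * Zᵀ) * Φt := by
    rw [← Matrix.mul_add, sub_add_cancel]
  calc frobNorm ((1 - Z * Zᵀ) * Ψ)
      ≤ frobNorm ((1 - Z * Zᵀ) * (Ψ - Φt)) + frobNorm ((1 - Z * Zᵀ) * Φt) := by
        rw [hsplit]; exact frobNorm_add_le _ _
    _ ≤ frobNorm (Ψ - Φt)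
        + Real.sqrt (∑ j ∈ Finset.univ.filter (fun j : Fin N => n ≤ (j : ℕ)), (σ j) ^ 2) := by
        gcongr
        · exact frobNorm_proj_mul_le Z hZZ _
        · rw [hTail, hTailSum]
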